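/- Let p ≥ 1 and n > 6p + 2, and let d(x) be the determinant of the quadratic least-squares moment matrix for points x₁,…,xₙ. Then ∫_{ℝⁿ} d(x)^{-p} Γ(x₁)⋯Γ(xₙ) dx < ∞, where Γ is the standard Gaussian density. -/

import Mathlib

open Real MeasureTheory BigOperators

open ENNReal

noncomputable def momentDet (n : ℕ) (x : Fin n → ℝ) : ℝ :=
  Matrix.det !![(n : ℝ), ∑ i, x i, ∑ i, (x i)^2;
                ∑ i, x i, ∑ i, (x i)^2, ∑ i, (x i)^3;
                ∑ i, (x i)^2, ∑ i, (x i)^3, ∑ i, (x i)^4]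

noncomputable def stdGauss (x : ℝ) : ℝ := Real.exp (-x^2 / 2) / Real.sqrt (2 * Real.pi)

lemma sum_poly4 (n : ℕ) (x : Fin n → ℝ) (C0 C1 C2 C3 C4 : ℝ) :
    ∑ k, (C4*(x k)^4 + C3*(x k)^3 + C2*(x k)^2 + C1*(x k) + C0)
    = C4*(∑ k, (x k)^4) + C3*(∑ k, (x k)^3) + C2*(∑ k, (x k)^2)
      + C1*(∑ k, x k) + (n:ℝ)*C0 := by
  simp [Finset.sum_add_distrib, ← Finset.mul_sum, Finset.sum_const, Finset.card_univ,
    nsmul_eq_mul, mul_comm]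

lemma six_momentDet (n : ℕ) (x : Fin n → ℝ) :
    6 * momentDet n x = ∑ i, ∑ j, ∑ k, ((x i - x j)*(x i - x k)*(x j - x k))^2 := by
  set s1 := ∑ i, x i with hs1
  set s2 := ∑ i, (x i)^2 with hs2
  set s3 := ∑ i, (x i)^3 with hs3
  set s4 := ∑ i, (x i)^4 with hs4
  have H1 : ∀ a b : ℝ, ∑ k, ((a - b)*(a - x k)*(b - x k))^2
      = (s2 - 2*a*s1 + a^2*(n:ℝ))*b^4 + (-2*s3 + 2*a*s2 + 2*a^2*s1 - 2*a^3*(n:ℝ))*b^3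
        + (s4 + 2*a*s3 - 6*a^2*s2 + 2*a^3*s1 + a^4*(n:ℝ))*b^2
        + (-2*a*s4 + 2*a^2*s3 + 2*a^3*s2 - 2*a^4*s1)*b
        + (a^2*s4 - 2*a^3*s3 + a^4*s2) := by
    intro a b
    have : ∀ k, ((a - b)*(a - x k)*(b - x k))^2
        = ((a-b)^2)*(x k)^4 + (-2*(a+b)*(a-b)^2)*(x k)^3 + (((a+b)^2+2*a*b)*(a-b)^2)*(x k)^2
          + (-2*a*b*(a+b)*(a-b)^2)*(x k) + (a^2*b^2*(a-b)^2) := fun k => by ring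
    rw [Finset.sum_congr rfl (fun k _ => this k), sum_poly4]
    ring
  have H2 : ∀ a : ℝ, ∑ j, ((s2 - 2*a*s1 + a^2*(n:ℝ))*(x j)^4 + (-2*s3 + 2*a*s2 + 2*a^2*s1 - 2*a^3*(n:ℝ))*(x j)^3
        + (s4 + 2*a*s3 - 6*a^2*s2 + 2*a^3*s1 + a^4*(n:ℝ))*(x j)^2
        + (-2*a*s4 + 2*a^2*s3 + 2*a^3*s2 - 2*a^4*s1)*(x j)
        + (a^2*s4 - 2*a^3*s3 + a^4*s2))
      = (-2*s1^2 + 2*(n:ℝ)*s2)*a^4 + (4*s1*s2 - 4*(n:ℝ)*s3)*a^3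
        + (-6*s2^2 + 4*s1*s3 + 2*(n:ℝ)*s4)*a^2 + (4*s2*s3 - 4*s1*s4)*a
        + (-2*s3^2 + 2*s2*s4) := by
    intro a
    rw [sum_poly4]
    ring
  have H3 : ∑ i, ∑ j, ∑ k, ((x i - x j)*(x i - x k)*(x j - x k))^2
      = ∑ i, ((-2*s1^2 + 2*(n:ℝ)*s2)*(x i)^4 + (4*s1*s2 - 4*(n:ℝ)*s3)*(x i)^3
        + (-6*s2^2 + 4*s1*s3 + 2*(n:ℝ)*s4)*(x i)^2 + (4*s2*s3 - 4*s1*s4)*(x i)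
        + (-2*s3^2 + 2*s2*s4)) := by
    refine Finset.sum_congr rfl (fun i _ => ?_)
    rw [Finset.sum_congr rfl (fun j _ => H1 (x i) (x j)), H2 (x i)]
  rw [H3, sum_poly4]
  simp [momentDet, Matrix.det_fin_three]
  ring

lemma momentDet_nonneg (n : ℕ) (x : Fin n → ℝ) : 0 ≤ momentDet n x := by
  have h := six_momentDet n x
  nlinarith [Finset.sum_nonneg (fun i (_ : i ∈ Finset.univ) => Finset.sum_nonneg (fun j (_ : j ∈ Finset.univ) =>
    Finset.sum_nonneg (fun k (_ : k ∈ Finset.univ) => sq_nonneg ((x i - x j)*(x i - x k)*(x j - x k)))))]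

lemma momentDet_ge (n : ℕ) (x : Fin n → ℝ) (i j k : Fin n) :
    ((x i - x j)*(x i - x k)*(x j - x k))^2 ≤ 6 * momentDet n x := by
  rw [six_momentDet]
  have nn2 : ∀ (a b : Fin n), 0 ≤ ∑ c, ((x a - x b)*(x a - x c)*(x b - x c))^2 :=
    fun a b => Finset.sum_nonneg (fun c _ => sq_nonneg _)
  have h1 : ((x i - x j)*(x i - x k)*(x j - x k))^2
      ≤ ∑ c, ((x i - x j)*(x i - x c)*(x j - x c))^2 :=
    Finset.single_le_sum (f := fun c => ((x i - x j)*(x i - x c)*(x j - x c))^2)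
      (fun c _ => sq_nonneg _) (Finset.mem_univ k)
  have h2 : ∑ c, ((x i - x j)*(x i - x c)*(x j - x c))^2
      ≤ ∑ b, ∑ c, ((x i - x b)*(x i - x c)*(x b - x c))^2 :=
    Finset.single_le_sum (f := fun b => ∑ c, ((x i - x b)*(x i - x c)*(x b - x c))^2)
      (fun b _ => nn2 i b) (Finset.mem_univ j)
  have h3 : ∑ b, ∑ c, ((x i - x b)*(x i - x c)*(x b - x c))^2
      ≤ ∑ a, ∑ b, ∑ c, ((x a - x b)*(x a - x c)*(x b - x c))^2 :=
    Finset.single_le_sum (f := fun a => ∑ b, ∑ c, ((x a - x b)*(x a - x c)*(x b - x c))^2)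
      (fun a _ => Finset.sum_nonneg (fun b _ => nn2 a b)) (Finset.mem_univ i)
  linarith


section Cluster
variable {n : ℕ}

lemma cluster_lemma (hn : 2 ≤ n) (x : Fin n → ℝ) {δ : ℝ} (hδ : 0 < δ)
    (h : ∀ i j k : Fin n, |x i - x j| < δ ∨ |x i - x k| < δ ∨ |x j - x k| < δ) :
    ∃ a b : Fin n, a ≠ b ∧ ∀ i, |x i - x a| ≤ n * δ ∨ |x i - x b| ≤ n * δ := by
  obtain ⟨m, hm⟩ : ∃ m, m + 1 = n := ⟨n - 1, by omega⟩
  set σ := Tuple.sort x with hσ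
  have mono := Tuple.monotone_sort x
  set y : ℕ → ℝ := fun j => x (σ ⟨min j m, by omega⟩) with hy
  have mono_y : Monotone y := by
    intro j k hjk
    exact mono (Fin.mk_le_mk.mpr (min_le_min_right m hjk))
  have h' : ∀ j1 j2 j3 : ℕ, |y j1 - y j2| < δ ∨ |y j1 - y j3| < δ ∨ |y j2 - y j3| < δ :=
    fun j1 j2 j3 => h _ _ _
  refine ⟨σ ⟨0, by omega⟩, σ ⟨m, by omega⟩, ?_, ?_⟩
  · intro hab
    have := σ.injective hab
    have : (0 : ℕ) = m := congrArg Fin.val this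
    omega
  intro i
  set u : ℕ := (σ.symm i).val with hu
  have hum : u ≤ m := by have := (σ.symm i).2; omega
  have hxi : x i = y u := by
    have hmk : (⟨min u m, by omega⟩ : Fin n) = σ.symm i := by
      ext
      simp [min_eq_left hum, hu]
      exact hum
    rw [hy]
    simp only [hmk, Equiv.apply_symm_apply]
  have hx0 : x (σ ⟨0, by omega⟩) = y 0 := by rw [hy]; congr 2
  have hxm : x (σ ⟨m, by omega⟩) = y m := by rw [hy]; congr 2; simp
  rw [hxi, hx0, hxm]
  rw [abs_of_nonneg (by linarith [mono_y (Nat.zero_le u)] : (0:ℝ) ≤ y u - y 0),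
    abs_of_nonpos (by linarith [mono_y hum] : y u - y m ≤ 0)]
  by_contra hc
  push_neg at hc
  obtain ⟨h1, h2⟩ := hc
  -- gap below u
  have gap_below : ∃ j, j + 1 ≤ u ∧ δ ≤ y (j+1) - y j := by
    by_contra hg
    push_neg at hg
    have : y u - y 0 ≤ u • δ := by
      rw [← Finset.sum_range_sub y u]
      calc ∑ j ∈ Finset.range u, (y (j+1) - y j) ≤ (Finset.range u).card • δ := by
            refine Finset.sum_le_card_nsmul _ _ _ (fun j hj => ?_)
            rw [Finset.mem_range] at hj
            exact le_of_lt (hg j (by omega))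
        _ = u • δ := by rw [Finset.card_range]
    rw [nsmul_eq_mul] at this
    have : (u:ℝ) * δ ≤ (n:ℝ) * δ := by
      apply mul_le_mul_of_nonneg_right _ (le_of_lt hδ)
      exact_mod_cast by omega
    linarith
  -- gap above u
  have gap_above : ∃ j, u ≤ j ∧ j + 1 ≤ m ∧ δ ≤ y (j+1) - y j := by
    by_contra hg
    push_neg at hg
    have key : y m - y u ≤ (m - u) • δ := by
      have tel : ∑ j ∈ Finset.range (m - u), (y (u + j + 1) - y (u + j)) = y m - y u := by
        have := Finset.sum_range_sub (fun j => y (u + j)) (m - u)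
        simpa [Nat.add_sub_cancel' hum, add_assoc] using this
      rw [← tel]
      calc ∑ j ∈ Finset.range (m-u), (y (u+j+1) - y (u+j))
          ≤ (Finset.range (m-u)).card • δ := by
            refine Finset.sum_le_card_nsmul _ _ _ (fun j hj => ?_)
            rw [Finset.mem_range] at hj
            exact le_of_lt (hg (u + j) (by omega) (by omega))
        _ = (m - u) • δ := by rw [Finset.card_range]
    rw [nsmul_eq_mul] at key
    have : ((m - u : ℕ):ℝ) * δ ≤ (n:ℝ) * δ := by
      apply mul_le_mul_of_nonneg_right _ (le_of_lt hδ)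
      exact_mod_cast by omega
    linarith
  obtain ⟨j1, hj1u, hj1⟩ := gap_below
  obtain ⟨j2, hj2u, hj2m, hj2⟩ := gap_above
  have h12 : j1 + 1 ≤ j2 := by omega
  have d1 : δ ≤ |y j1 - y (j1+1)| := by
    rw [abs_sub_comm, abs_of_nonneg (by linarith [mono_y (Nat.le_succ j1)] : (0:ℝ) ≤ y (j1+1) - y j1)]
    linarith
  have d2 : δ ≤ |y (j1+1) - y (j2+1)| := by
    have := mono_y h12
    rw [abs_sub_comm, abs_of_nonneg (by linarith [mono_y (by omega : j1 + 1 ≤ j2 + 1)] :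
      (0:ℝ) ≤ y (j2+1) - y (j1+1))]
    linarith
  have d3 : δ ≤ |y j1 - y (j2+1)| := by
    have := mono_y (by omega : j1 + 1 ≤ j2)
    rw [abs_sub_comm, abs_of_nonneg (by linarith [mono_y (by omega : j1 ≤ j2 + 1)] :
      (0:ℝ) ≤ y (j2+1) - y j1)]
    linarith [mono_y (Nat.le_succ j1)]
  rcases h' j1 (j1+1) (j2+1) with hlt | hlt | hlt
  · linarith
  · linarith
  · have := mono_y h12
    have d2' : δ ≤ |y (j1+1) - y (j2+1)| := d2
    linarith [abs_sub_comm (y (j1+1)) (y (j2+1))]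

end Cluster


noncomputable def gE : ℝ → ℝ≥0∞ := fun y => ENNReal.ofReal (stdGauss y)

lemma stdGauss_nonneg (y : ℝ) : 0 ≤ stdGauss y := by
  unfold stdGauss
  positivity

lemma stdGauss_cont : Continuous stdGauss := by
  unfold stdGauss
  fun_prop

lemma stdGauss_le_one (y : ℝ) : stdGauss y ≤ 1 := by
  unfold stdGauss
  have h1 : Real.exp (-y^2/2) ≤ 1 := by
    rw [Real.exp_le_one_iff]
    nlinarith [sq_nonneg y]
  have h2 : (1:ℝ) ≤ Real.sqrt (2 * Real.pi) := by
    rw [show (1:ℝ) = Real.sqrt 1 by simp]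
    exact Real.sqrt_le_sqrt (by nlinarith [Real.pi_gt_three])
  rw [div_le_one (by linarith : (0:ℝ) < Real.sqrt (2*Real.pi))]
  linarith

lemma gE_meas : Measurable gE := stdGauss_cont.measurable.ennreal_ofReal

lemma gE_le_one (y : ℝ) : gE y ≤ 1 := by
  unfold gE
  exact ENNReal.ofReal_le_one.mpr (stdGauss_le_one y)

lemma lintegral_gE : ∫⁻ y, gE y = 1 := by
  have heq : ∀ y, stdGauss y = ProbabilityTheory.gaussianPDFReal 0 1 y := by
    intro y
    simp [stdGauss, ProbabilityTheory.gaussianPDFReal, div_eq_inv_mul]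
  unfold gE
  simp_rw [heq]
  exact ProbabilityTheory.lintegral_gaussianPDFReal_eq_one 0 one_ne_zero

lemma strip_bound (t L : ℝ) :
    ∫⁻ y, ({z : ℝ | |z - t| ≤ L}.indicator gE) y ≤ ENNReal.ofReal (2*L) := by
  have hset : {z : ℝ | |z - t| ≤ L} = Set.Icc (t - L) (t + L) := by
    ext z
    simp [abs_sub_le_iff, Set.mem_Icc]
    constructor
    · rintro ⟨h1, h2⟩; constructor <;> linarith
    · rintro ⟨h1, h2⟩; constructor <;> linarith
  rw [hset]
  calc ∫⁻ y, ((Set.Icc (t-L) (t+L)).indicator gE) y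
      ≤ ∫⁻ y, ((Set.Icc (t-L) (t+L)).indicator (fun _ => (1:ℝ≥0∞))) y := by
        apply lintegral_mono
        intro y
        exact Set.indicator_le_indicator' (fun _ => gE_le_one y)
    _ = volume (Set.Icc (t-L) (t+L)) := by
        rw [lintegral_indicator measurableSet_Icc]
        simp
    _ ≤ ENNReal.ofReal (2*L) := by
        rw [Real.volume_Icc]
        apply ENNReal.ofReal_le_ofReal
        ring_nf
        linarith

section Marg
variable {n : ℕ}

noncomputable def gFac (a b : Fin n) (c : Fin n → Fin n) (L : ℝ) (i : Fin n)
    (x : Fin n → ℝ) : ℝ≥0∞ :=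
  if i = a ∨ i = b then gE (x i) else ({z : ℝ | |z - x (c i)| ≤ L}.indicator gE) (x i)

lemma gFac_meas (a b : Fin n) (c : Fin n → Fin n) (L : ℝ) (i : Fin n) :
    Measurable (gFac a b c L i) := by
  unfold gFac
  by_cases h : i = a ∨ i = b
  · simp only [h, if_true]
    exact gE_meas.comp (measurable_pi_apply i)
  · simp only [h, if_false]
    have hrw : (fun x : Fin n → ℝ => ({z : ℝ | |z - x (c i)| ≤ L}.indicator gE) (x i))
        = Set.indicator {x : Fin n → ℝ | |x i - x (c i)| ≤ L} (fun x => gE (x i)) := by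
      funext x
      by_cases hx : |x i - x (c i)| ≤ L <;>
        simp [Set.indicator, hx]
    rw [hrw]
    have hcl : MeasurableSet {x : Fin n → ℝ | |x i - x (c i)| ≤ L} :=
      (isClosed_le (continuous_abs.comp ((continuous_apply i).sub
        (continuous_apply (c i)))) continuous_const).measurableSet
    exact (gE_meas.comp (measurable_pi_apply i)).indicator hcl

lemma gFac_le_one (a b : Fin n) (c : Fin n → Fin n) (L : ℝ) (i : Fin n) (x : Fin n → ℝ) :
    gFac a b c L i x ≤ 1 := by
  unfold gFac
  by_cases h : i = a ∨ i = b
  · simp only [h, if_true]; exact gE_le_one _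
  · simp only [h, if_false]
    exact le_trans (Set.indicator_le_self _ _ _) (gE_le_one _)

lemma marg_bound (a b : Fin n) (hab : a ≠ b) (c : Fin n → Fin n)
    (hc : ∀ i, c i = a ∨ c i = b) (L : ℝ) :
    ∫⁻ x : Fin n → ℝ, ∏ i, gFac a b c L i x ≤ ENNReal.ofReal (2*L) ^ (n - 2) := by
  classical
  set F : (Fin n → ℝ) → ℝ≥0∞ := fun x => ∏ i, gFac a b c L i x with hF
  have measF : Measurable F := Finset.measurable_prod _ (fun i _ => gFac_meas a b c L i)
  have ind : ∀ s : Finset (Fin n), a ∉ s → b ∉ s → ∀ x,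
      (∫⋯∫⁻_s, F) x ≤ ENNReal.ofReal (2*L) ^ s.card * ∏ i ∈ sᶜ, gFac a b c L i x := by
    intro s
    induction s using Finset.induction_on with
    | empty => intro _ _ x; simp [hF]
    | @insert i s his ih =>
      intro ha hb x
      have hia : i ≠ a := fun h => ha (by simp [h])
      have hib : i ≠ b := fun h => hb (by simp [h])
      have hci : c i ≠ i := by rcases hc i with h | h <;> simp [h, hia.symm, hib.symm] <;> omega
      have hanotin : a ∉ s := fun h => ha (Finset.mem_insert_of_mem h)
      have hbnotin : b ∉ s := fun h => hb (Finset.mem_insert_of_mem h)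
      rw [lmarginal_insert _ measF his]
      have hiIns : ¬(i = a ∨ i = b) := by tauto
      have step1 : ∀ y : ℝ, (∫⋯∫⁻_s, F) (Function.update x i y)
          ≤ (ENNReal.ofReal (2*L) ^ s.card * ∏ j ∈ sᶜ.erase i, gFac a b c L j x) *
            ({z : ℝ | |z - x (c i)| ≤ L}.indicator gE) y := by
        intro y
        refine le_trans (ih hanotin hbnotin (Function.update x i y)) ?_
        have hisc : i ∈ sᶜ := Finset.mem_compl.mpr his
        rw [← Finset.mul_prod_erase _ _ hisc]
        have heval : gFac a b c L i (Function.update x i y)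
            = ({z : ℝ | |z - x (c i)| ≤ L}.indicator gE) y := by
          unfold gFac
          rw [if_neg hiIns]
          rw [Function.update_self, Function.update_of_ne hci]
        have hothers : ∀ j ∈ sᶜ.erase i, gFac a b c L j (Function.update x i y)
            = gFac a b c L j x := by
          intro j hj
          have hji : j ≠ i := Finset.ne_of_mem_erase hj
          unfold gFac
          by_cases hjab : j = a ∨ j = b
          · rw [if_pos hjab, if_pos hjab, Function.update_of_ne hji]
          · have hcj : c j ≠ i := by rcases hc j with h | h <;> simp [h, hia.symm, hib.symm]
            rw [if_neg hjab, if_neg hjab, Function.update_of_ne hji, Function.update_of_ne hcj]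
        rw [heval, Finset.prod_congr rfl hothers]
        exact le_of_eq (by ring)
      calc ∫⁻ y, (∫⋯∫⁻_s, F) (Function.update x i y)
          ≤ ∫⁻ y, (ENNReal.ofReal (2*L) ^ s.card * ∏ j ∈ sᶜ.erase i, gFac a b c L j x) *
              ({z : ℝ | |z - x (c i)| ≤ L}.indicator gE) y := lintegral_mono step1
        _ = (ENNReal.ofReal (2*L) ^ s.card * ∏ j ∈ sᶜ.erase i, gFac a b c L j x) *
              ∫⁻ y, ({z : ℝ | |z - x (c i)| ≤ L}.indicator gE) y := by
            rw [lintegral_const_mul]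
            exact gE_meas.indicator ((isClosed_le (continuous_abs.comp
              ((continuous_id).sub continuous_const)) continuous_const).measurableSet)
        _ ≤ (ENNReal.ofReal (2*L) ^ s.card * ∏ j ∈ sᶜ.erase i, gFac a b c L j x) *
              ENNReal.ofReal (2*L) := mul_le_mul_right (strip_bound _ _) _
        _ = ENNReal.ofReal (2*L) ^ (insert i s).card * ∏ j ∈ (insert i s)ᶜ, gFac a b c L j x := by
            rw [Finset.card_insert_of_notMem his, Finset.compl_insert, pow_succ]
            ring
  -- conclude
  have hne : Nonempty (Fin n) := ⟨a⟩
  set x₀ : Fin n → ℝ := fun _ => 0 with hx0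
  have habf : a ∉ ({b} : Finset (Fin n)) := by simp [hab]
  have hsplit : ({a, b} : Finset (Fin n)) ∪ ({a, b} : Finset (Fin n))ᶜ = Finset.univ :=
    Finset.union_compl _
  have hcard : (({a, b} : Finset (Fin n))ᶜ).card = n - 2 := by
    rw [Finset.card_compl, Finset.card_pair hab, Fintype.card_fin]
  rw [volume_pi, lintegral_eq_lmarginal_univ x₀]
  show (∫⋯∫⁻_Finset.univ, F) x₀ ≤ ENNReal.ofReal (2*L) ^ (n - 2)
  rw [← hsplit, lmarginal_union _ F measF disjoint_compl_right]
  set C : ℝ≥0∞ := ENNReal.ofReal (2*L) ^ (n - 2) with hC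
  have inner_bd : (∫⋯∫⁻_({a, b} : Finset (Fin n))ᶜ, F) ≤
      fun z => C * (gE (z a) * gE (z b)) := by
    intro z
    refine le_trans (ind _ (by simp) (by simp) z) ?_
    rw [hcard, compl_compl, Finset.prod_pair hab]
    have h1 : gFac a b c L a z = gE (z a) := by unfold gFac; rw [if_pos (Or.inl rfl)]
    have h2 : gFac a b c L b z = gE (z b) := by unfold gFac; rw [if_pos (Or.inr rfl)]
    rw [h1, h2]
  have measH : Measurable (fun z : Fin n → ℝ => C * (gE (z a) * gE (z b))) := by
    apply Measurable.const_mul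
    exact (gE_meas.comp (measurable_pi_apply a)).mul (gE_meas.comp (measurable_pi_apply b))
  calc (∫⋯∫⁻_({a,b} : Finset (Fin n)), ∫⋯∫⁻_({a,b} : Finset (Fin n))ᶜ, F) x₀
      ≤ (∫⋯∫⁻_({a,b} : Finset (Fin n)), fun z => C * (gE (z a) * gE (z b))) x₀ :=
        lmarginal_mono inner_bd x₀
    _ = C := by
        rw [show ({a, b} : Finset (Fin n)) = insert a {b} from rfl,
          lmarginal_insert _ measH habf]
        have hsing : ∀ w : Fin n → ℝ,
            (∫⋯∫⁻_({b} : Finset (Fin n)), fun z => C * (gE (z a) * gE (z b))) w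
            = C * gE (w a) := by
          intro w
          rw [lmarginal_singleton]
          have : ∀ yb, C * (gE ((Function.update w b yb) a) * gE ((Function.update w b yb) b))
              = (C * gE (w a)) * gE yb := by
            intro yb
            rw [Function.update_self, Function.update_of_ne hab]
            ring
          simp_rw [this]
          rw [lintegral_const_mul _ gE_meas, lintegral_gE, mul_one]
        simp_rw [hsing]
        have : ∀ ya, C * gE ((Function.update x₀ a ya) a) = C * gE ya := by
          intro ya; rw [Function.update_self]
        simp_rw [this]
        rw [lintegral_const_mul _ gE_meas, lintegral_gE, mul_one]

end Marg


section Final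
variable {n : ℕ}

lemma momentDet_cont : Continuous (momentDet n) := by
  have hrw : momentDet n = fun x => 6⁻¹ * ∑ i, ∑ j, ∑ k, ((x i - x j)*(x i - x k)*(x j - x k))^2 := by
    funext x
    have := six_momentDet n x
    linarith
  rw [hrw]
  refine continuous_const.mul ?_
  refine continuous_finset_sum _ (fun i _ => continuous_finset_sum _ (fun j _ =>
    continuous_finset_sum _ (fun k _ => ?_)))
  exact ((((continuous_apply i).sub (continuous_apply j)).mul
    ((continuous_apply i).sub (continuous_apply k))).mul
    ((continuous_apply j).sub (continuous_apply k))).pow 2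

lemma gap_of_small (x : Fin n → ℝ) {δ : ℝ} (hδ : 0 < δ)
    (h : momentDet n x < 6⁻¹ * δ^6) :
    ∀ i j k : Fin n, |x i - x j| < δ ∨ |x i - x k| < δ ∨ |x j - x k| < δ := by
  intro i j k
  by_contra hcon
  push_neg at hcon
  obtain ⟨h1, h2, h3⟩ := hcon
  have key : δ^6 ≤ ((x i - x j)*(x i - x k)*(x j - x k))^2 := by
    have e : ((x i - x j)*(x i - x k)*(x j - x k))^2
        = (|x i - x j| * |x i - x k| * |x j - x k|)^2 := by
      rw [← abs_mul, ← abs_mul, sq_abs]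
    rw [e]
    have hp : δ * δ * δ ≤ |x i - x j| * |x i - x k| * |x j - x k| := by
      have := mul_le_mul h1 h2 (le_of_lt hδ) (abs_nonneg _)
      exact mul_le_mul this h3 (le_of_lt hδ) (by positivity)
    calc δ^6 = (δ * δ * δ)^2 := by ring
      _ ≤ _ := by
          apply pow_le_pow_left₀ (by positivity) hp
  have := momentDet_ge n x i j k
  linarith

-- the covering set bound
lemma cover_bound (hn : 2 ≤ n) (m : ℕ) :
    ∫⁻ x : Fin n → ℝ,
      ({x : Fin n → ℝ | momentDet n x < (6 * (2:ℝ)^(6*m))⁻¹}.indicator (fun _ => 1) x)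
        * ∏ i, gE (x i)
      ≤ (Fintype.card ((Fin n × Fin n) × (Fin n → Fin n))) •
          (ENNReal.ofReal (2*((n:ℝ) * ((2:ℝ)^m)⁻¹)) ^ (n - 2)) := by
  classical
  set δ : ℝ := ((2:ℝ)^m)⁻¹ with hδdef
  have hδ : 0 < δ := by positivity
  set L : ℝ := (n:ℝ) * δ with hL
  set B : Set (Fin n → ℝ) := {x | momentDet n x < (6 * (2:ℝ)^(6*m))⁻¹} with hB
  set ι := (Fin n × Fin n) × (Fin n → Fin n)
  set Ff : ι → (Fin n → ℝ) → ℝ≥0∞ := fun t =>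
    if t.1.1 ≠ t.1.2 ∧ (∀ i, t.2 i = t.1.1 ∨ t.2 i = t.1.2) then
      (fun x => ∏ i, gFac t.1.1 t.1.2 t.2 L i x) else 0 with hFf
  have measFf : ∀ t, Measurable (Ff t) := by
    intro t
    simp only [hFf]
    by_cases h : t.1.1 ≠ t.1.2 ∧ (∀ i, t.2 i = t.1.1 ∨ t.2 i = t.1.2)
    · rw [if_pos h]
      exact Finset.measurable_prod _ (fun i _ => gFac_meas _ _ _ _ i)
    · rw [if_neg h]
      exact measurable_const
  have hthresh : (6 * (2:ℝ)^(6*m))⁻¹ = 6⁻¹ * δ^6 := by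
    rw [hδdef, inv_pow, ← pow_mul, mul_comm m 6, mul_inv]
  have pointwise : ∀ x, (B.indicator (fun _ => (1:ℝ≥0∞)) x) * ∏ i, gE (x i)
      ≤ ∑ t : ι, Ff t x := by
    intro x
    by_cases hx : x ∈ B
    · rw [Set.indicator_of_mem hx, one_mul]
      have hgap := gap_of_small x hδ (by rw [← hthresh]; exact hx)
      obtain ⟨a, b, hab, hcl⟩ := cluster_lemma hn x hδ hgap
      set c : Fin n → Fin n := fun i => if |x i - x a| ≤ L then a else b with hc
      have hcv : ∀ i, c i = a ∨ c i = b := by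
        intro i; rw [hc]; by_cases h : |x i - x a| ≤ L <;> simp [h]
      have hsat : ∀ i, |x i - x (c i)| ≤ L := by
        intro i
        rw [hc]
        by_cases h : |x i - x a| ≤ L
        · simpa [h] using h
        · simp only [h, if_false]
          rcases hcl i with hi | hi
          · exact absurd hi h
          · exact hi
      have hval : Ff ((a, b), c) x = ∏ i, gE (x i) := by
        simp only [hFf]
        simp only [if_pos (And.intro hab hcv)]
        refine Finset.prod_congr rfl (fun i _ => ?_)
        unfold gFac
        by_cases h : i = a ∨ i = b
        · rw [if_pos h]
        · rw [if_neg h, Set.indicator_of_mem]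
          exact hsat i
      calc ∏ i, gE (x i) = Ff ((a,b),c) x := hval.symm
        _ ≤ ∑ t : ι, Ff t x := Finset.single_le_sum (f := fun t : ι => Ff t x) (fun t _ => zero_le) (Finset.mem_univ (((a,b),c) : ι))
    · rw [Set.indicator_of_notMem hx, zero_mul]
      exact zero_le
  calc ∫⁻ x, (B.indicator (fun _ => (1:ℝ≥0∞)) x) * ∏ i, gE (x i)
      ≤ ∫⁻ x, ∑ t : ι, Ff t x := lintegral_mono pointwise
    _ = ∑ t : ι, ∫⁻ x, Ff t x := lintegral_finset_sum _ (fun t _ => measFf t)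
    _ ≤ ∑ _t : ι, ENNReal.ofReal (2*L) ^ (n-2) := by
        refine Finset.sum_le_sum (fun t _ => ?_)
        simp only [hFf]
        by_cases h : t.1.1 ≠ t.1.2 ∧ (∀ i, t.2 i = t.1.1 ∨ t.2 i = t.1.2)
        · simp only [if_pos h]
          exact marg_bound _ _ h.1 _ h.2 L
        · simp only [if_neg h]
          simp
    _ = (Fintype.card ι) • (ENNReal.ofReal (2*L) ^ (n-2)) := by
        rw [Finset.sum_const, Finset.card_univ]

lemma lintegral_G : ∫⁻ x : Fin n → ℝ, ∏ i, gE (x i) = 1 := by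
  classical
  set G : (Fin n → ℝ) → ℝ≥0∞ := fun x => ∏ i, gE (x i) with hG
  have measG : Measurable G :=
    Finset.measurable_prod _ (fun i _ => gE_meas.comp (measurable_pi_apply i))
  have ind : ∀ s : Finset (Fin n), ∀ x, (∫⋯∫⁻_s, G) x = ∏ i ∈ sᶜ, gE (x i) := by
    intro s
    induction s using Finset.induction_on with
    | empty => intro x; simp [hG]
    | @insert i s his ih =>
      intro x
      rw [lmarginal_insert _ measG his]
      have hisc : i ∈ sᶜ := Finset.mem_compl.mpr his
      have step : ∀ y : ℝ, (∫⋯∫⁻_s, G) (Function.update x i y)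
          = (∏ j ∈ sᶜ.erase i, gE (x j)) * gE y := by
        intro y
        rw [ih]
        rw [← Finset.mul_prod_erase _ _ hisc, Function.update_self]
        rw [Finset.prod_congr rfl (fun j hj =>
          by rw [Function.update_of_ne (Finset.ne_of_mem_erase hj)])]
        ring
      simp_rw [step]
      rw [lintegral_const_mul _ gE_meas, lintegral_gE, mul_one, Finset.compl_insert]
  have x₀ : Fin n → ℝ := fun _ => 0
  rw [volume_pi, lintegral_eq_lmarginal_univ x₀, ind Finset.univ x₀]
  simp

lemma pointwise_bound (p : ℝ) (hp : 1 ≤ p) (x : Fin n → ℝ) :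
    ENNReal.ofReal (momentDet n x ^ (-p))
      ≤ ENNReal.ofReal ((6:ℝ)^p)
        + ∑' m : ℕ, ENNReal.ofReal ((6 * (2:ℝ)^(6*(m+1)))^p)
            * ({x : Fin n → ℝ | momentDet n x < (6 * (2:ℝ)^(6*m))⁻¹}.indicator (fun _ => 1) x) := by
  set d := momentDet n x with hd
  have hd0 : 0 ≤ d := momentDet_nonneg n x
  have hpne : -p ≠ 0 := by intro h; simp at h; linarith
  rcases eq_or_lt_of_le hd0 with h0 | hpos
  · rw [← h0, Real.zero_rpow hpne]
    simp
  by_cases hd6 : 6⁻¹ ≤ d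
  · have h1 : d ^ (-p) ≤ ((6:ℝ)⁻¹) ^ (-p) :=
      Real.rpow_le_rpow_of_nonpos (by norm_num) hd6 (by linarith)
    have h2 : ((6:ℝ)⁻¹) ^ (-p) = (6:ℝ)^p := by
      rw [Real.inv_rpow (by norm_num), ← Real.rpow_neg (by norm_num), neg_neg]
    refine le_trans ?_ le_self_add
    exact ENNReal.ofReal_le_ofReal (h2 ▸ h1)
  · have hex : ∃ k : ℕ, (6 * (2:ℝ)^(6*k))⁻¹ ≤ d := by
      obtain ⟨k, hk⟩ := exists_pow_lt_of_lt_one hpos (by norm_num : (2:ℝ)⁻¹ < 1)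
      refine ⟨k, le_trans ?_ (le_of_lt hk)⟩
      rw [inv_pow]
      apply inv_anti₀ (by positivity)
      calc (2:ℝ)^k ≤ (2:ℝ)^(6*k) := by
            apply pow_le_pow_right₀ one_le_two; omega
        _ ≤ 6 * (2:ℝ)^(6*k) := by nlinarith [pow_pos (by norm_num : (0:ℝ) < 2) (6*k)]
    set M := Nat.find hex with hM
    have hMspec : (6 * (2:ℝ)^(6*M))⁻¹ ≤ d := Nat.find_spec hex
    have hM0 : M ≠ 0 := by
      intro h
      rw [h] at hMspec
      simp at hMspec
      exact hd6 (by linarith)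
    obtain ⟨m, hm⟩ := Nat.exists_eq_succ_of_ne_zero hM0
    have hmem : x ∈ {x : Fin n → ℝ | momentDet n x < (6 * (2:ℝ)^(6*m))⁻¹} := by
      have := Nat.find_min hex (by omega : m < M)
      push_neg at this
      exact this
    have hbd : d ^ (-p) ≤ (6 * (2:ℝ)^(6*(m+1)))^p := by
      have h1 : d ^ (-p) ≤ ((6 * (2:ℝ)^(6*(m+1)))⁻¹) ^ (-p) := by
        apply Real.rpow_le_rpow_of_nonpos (by positivity) _ (by linarith)
        rw [hm] at hMspec
        exact hMspec
      have h2 : ((6 * (2:ℝ)^(6*(m+1)))⁻¹) ^ (-p) = (6 * (2:ℝ)^(6*(m+1)))^p := by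
        rw [Real.inv_rpow (by positivity), ← Real.rpow_neg (by positivity), neg_neg]
      linarith
    refine le_trans ?_ le_add_self
    refine le_trans ?_ (ENNReal.le_tsum m)
    rw [Set.indicator_of_mem hmem, mul_one]
    exact ENNReal.ofReal_le_ofReal hbd

theorem stmt15 (p : ℝ) (hp : 1 ≤ p) (n : ℕ) (hn : (n : ℝ) > 6 * p + 2) :
    Integrable (fun x : Fin n → ℝ =>
      momentDet n x ^ (-p) * ∏ i, stdGauss (x i)) (volume) := by
  classical
  have hn8 : (8:ℝ) < (n:ℝ) := by linarith
  have hn2 : 2 ≤ n := by exact_mod_cast (by norm_num : (2:ℝ) ≤ 8).trans_lt hn8 |>.le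
  have hp0 : (0:ℝ) < p := by linarith
  -- measurability
  have meas_d : Measurable (momentDet n) := momentDet_cont.measurable
  have meas_rpow : Measurable (fun x : Fin n → ℝ => momentDet n x ^ (-p)) := by
    have hrw : (fun x : Fin n → ℝ => momentDet n x ^ (-p))
        = fun x => if momentDet n x = 0 then 0
            else Real.exp (Real.log (momentDet n x) * (-p)) := by
      funext x
      by_cases h : momentDet n x = 0
      · rw [if_pos h, h, Real.zero_rpow (by intro hh; simp at hh; linarith)]
      · rw [if_neg h, Real.rpow_def_of_pos (lt_of_le_of_ne (momentDet_nonneg n x) (Ne.symm h))]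
    rw [hrw]
    exact Measurable.ite (meas_d (measurableSet_singleton 0)) measurable_const
      (Real.measurable_exp.comp ((Real.measurable_log.comp meas_d).mul_const (-p)))
  have meas_prod : Measurable (fun x : Fin n → ℝ => ∏ i, stdGauss (x i)) :=
    Finset.measurable_prod _ (fun i _ => stdGauss_cont.measurable.comp (measurable_pi_apply i))
  have nonneg : ∀ x : Fin n → ℝ, 0 ≤ momentDet n x ^ (-p) * ∏ i, stdGauss (x i) := by
    intro x
    apply mul_nonneg (Real.rpow_nonneg (momentDet_nonneg n x) _)
    exact Finset.prod_nonneg (fun i _ => stdGauss_nonneg _)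
  refine ⟨(meas_rpow.mul meas_prod).aestronglyMeasurable, ?_⟩
  rw [hasFiniteIntegral_iff_ofReal (Filter.Eventually.of_forall nonneg)]
  -- rewrite integrand
  have hsplit : ∀ x : Fin n → ℝ, ENNReal.ofReal (momentDet n x ^ (-p) * ∏ i, stdGauss (x i))
      = ENNReal.ofReal (momentDet n x ^ (-p)) * ∏ i, gE (x i) := by
    intro x
    rw [ENNReal.ofReal_mul (Real.rpow_nonneg (momentDet_nonneg n x) _),
      ENNReal.ofReal_prod_of_nonneg (fun i _ => stdGauss_nonneg _)]
    rfl
  simp_rw [hsplit]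
  -- notation
  set G : (Fin n → ℝ) → ℝ≥0∞ := fun x => ∏ i, gE (x i) with hG
  have measG : Measurable G :=
    Finset.measurable_prod _ (fun i _ => gE_meas.comp (measurable_pi_apply i))
  set B : ℕ → Set (Fin n → ℝ) :=
    fun m => {x | momentDet n x < (6 * (2:ℝ)^(6*m))⁻¹} with hB
  have measB : ∀ m, MeasurableSet (B m) := fun m => meas_d measurableSet_Iio
  set q : ℕ → ℝ := fun m => (6 * (2:ℝ)^(6*(m+1)))^p with hq
  have hq0 : ∀ m, 0 ≤ q m := fun m => Real.rpow_nonneg (by positivity) _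
  set Nc : ℕ := Fintype.card ((Fin n × Fin n) × (Fin n → Fin n)) with hNc
  -- geometric data
  set ρ : ℝ := (2:ℝ)^(6*p - ((n:ℝ)-2)) with hρ
  have hρ1 : ρ < 1 := Real.rpow_lt_one_of_one_lt_of_neg (by norm_num) (by linarith)
  have hρ0 : 0 ≤ ρ := Real.rpow_nonneg (by norm_num) _
  set C0 : ℝ := (6 * 2^6)^p * (2*(n:ℝ))^(n-2) with hC0
  have hC00 : 0 ≤ C0 := by positivity
  have hpow2 : ∀ (u : ℝ) (k : ℕ), (((2:ℝ)^(u:ℝ))^k) = (2:ℝ)^(u * k) := by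
    intro u k
    rw [← Real.rpow_natCast ((2:ℝ)^u) k, ← Real.rpow_mul (by norm_num)]
  have key_real : ∀ m : ℕ, q m * (2*((n:ℝ) * ((2:ℝ)^m)⁻¹))^(n-2) ≤ C0 * ρ^m := by
    intro m
    apply le_of_eq
    have e1 : q m = (6 * (2:ℝ)^6)^p * (2:ℝ)^(p*(6*(m:ℝ))) := by
      simp only [hq]
      have : (6:ℝ) * (2:ℝ)^(6*(m+1)) = (6 * 2^6) * (2:ℝ)^(6*m) := by
        rw [show 6*(m+1) = 6*m + 6 by ring, pow_add]; ring
      rw [this, Real.mul_rpow (by positivity) (by positivity)]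
      congr 1
      rw [← Real.rpow_natCast (2:ℝ) (6*m), ← Real.rpow_mul (by norm_num)]
      congr 1
      push_cast
      ring
    have e2 : (2*((n:ℝ) * ((2:ℝ)^m)⁻¹))^(n-2)
        = (2*(n:ℝ))^(n-2) * ((2:ℝ)^(-(m:ℝ)))^(n-2) := by
      rw [show (2:ℝ)*((n:ℝ) * ((2:ℝ)^m)⁻¹) = (2*(n:ℝ)) * ((2:ℝ)^m)⁻¹ by ring, mul_pow]
      congr 2
      rw [← Real.rpow_natCast (2:ℝ) m, ← Real.rpow_neg (by norm_num)]
    have e3 : (((2:ℝ)^(-(m:ℝ)))^(n-2)) = (2:ℝ)^((-(m:ℝ)) * ((n-2 : ℕ):ℝ)) := hpow2 _ _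
    have e4 : ρ^m = (2:ℝ)^((6*p - ((n:ℝ)-2)) * m) := hpow2 _ _
    have e5 : (2:ℝ)^(p*(6*(m:ℝ))) * (2:ℝ)^((-(m:ℝ)) * ((n-2 : ℕ):ℝ))
        = (2:ℝ)^((6*p - ((n:ℝ)-2)) * m) := by
      rw [← Real.rpow_add (by norm_num)]
      congr 1
      rw [Nat.cast_sub hn2]
      push_cast
      ring
    rw [e1, e2, e3, e4, ← e5, hC0]
    ring
  -- main estimate
  calc ∫⁻ x, ENNReal.ofReal (momentDet n x ^ (-p)) * G x
      ≤ ∫⁻ x, (ENNReal.ofReal ((6:ℝ)^p)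
          + ∑' m : ℕ, ENNReal.ofReal (q m) * ((B m).indicator (fun _ => 1) x)) * G x := by
        apply lintegral_mono
        intro x
        exact mul_le_mul_left (pointwise_bound p hp x) _
    _ = ∫⁻ x, ENNReal.ofReal ((6:ℝ)^p) * G x
          + ∑' m : ℕ, (ENNReal.ofReal (q m) * ((B m).indicator (fun _ => 1) x)) * G x := by
        congr 1
        funext x
        rw [add_mul, ENNReal.tsum_mul_right]
    _ = ENNReal.ofReal ((6:ℝ)^p) * (∫⁻ x, G x)
          + ∑' m : ℕ, ∫⁻ x, (ENNReal.ofReal (q m) * ((B m).indicator (fun _ => 1) x)) * G x := by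
        rw [lintegral_add_left (measG.const_mul _), lintegral_const_mul _ measG,
          lintegral_tsum]
        intro m
        exact ((measurable_const.mul ((measurable_const.indicator (measB m)))).mul measG).aemeasurable
    _ ≤ ENNReal.ofReal ((6:ℝ)^p) * 1
          + ∑' m : ℕ, ENNReal.ofReal (q m) *
              (Nc • (ENNReal.ofReal (2*((n:ℝ) * ((2:ℝ)^m)⁻¹)) ^ (n - 2))) := by
        have hGint : (∫⁻ x, G x) = 1 := lintegral_G
        rw [hGint]
        apply add_le_add_right
        apply ENNReal.tsum_le_tsum
        intro m
        have : ∀ x, (ENNReal.ofReal (q m) * ((B m).indicator (fun _ => 1) x)) * G x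
            = ENNReal.ofReal (q m) * (((B m).indicator (fun _ => 1) x) * G x) := by
          intro x; ring
        simp_rw [this]
        rw [lintegral_const_mul (f := fun x => (B m).indicator (fun _ => (1:ℝ≥0∞)) x * G x) _
          ((measurable_const.indicator (measB m)).mul measG)]
        exact mul_le_mul_right (cover_bound hn2 m) _
    _ ≤ ENNReal.ofReal ((6:ℝ)^p) * 1
          + (Nc : ℝ≥0∞) * (ENNReal.ofReal C0 * (1 - ENNReal.ofReal ρ)⁻¹) := by
        apply add_le_add_right
        have term_bd : ∀ m : ℕ, ENNReal.ofReal (q m) *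
            (Nc • (ENNReal.ofReal (2*((n:ℝ) * ((2:ℝ)^m)⁻¹)) ^ (n - 2)))
            ≤ (Nc:ℝ≥0∞) * (ENNReal.ofReal C0 * ENNReal.ofReal ρ ^ m) := by
          intro m
          have hL0 : (0:ℝ) ≤ 2*((n:ℝ) * ((2:ℝ)^m)⁻¹) := by positivity
          rw [nsmul_eq_mul, ← ENNReal.ofReal_pow hL0, ← mul_assoc, mul_comm (ENNReal.ofReal (q m)),
            mul_assoc, ← ENNReal.ofReal_mul (hq0 m)]
          apply mul_le_mul_right
          refine le_trans (ENNReal.ofReal_le_ofReal (key_real m)) ?_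
          rw [ENNReal.ofReal_mul hC00, ENNReal.ofReal_pow hρ0]
        refine le_trans (ENNReal.tsum_le_tsum term_bd) ?_
        rw [ENNReal.tsum_mul_left, ENNReal.tsum_mul_left, ENNReal.tsum_geometric]
    _ < ⊤ := by
        apply ENNReal.add_lt_top.mpr
        have h1 : (1 : ℝ≥0∞) - ENNReal.ofReal ρ ≠ 0 := by
          rw [Ne, tsub_eq_zero_iff_le]
          exact not_le.mpr (ENNReal.ofReal_lt_one.mpr hρ1)
        constructor
        · exact ENNReal.mul_lt_top ENNReal.ofReal_lt_top ENNReal.one_lt_top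
        · exact ENNReal.mul_lt_top (ENNReal.natCast_lt_top Nc)
            (ENNReal.mul_lt_top ENNReal.ofReal_lt_top
              (lt_top_iff_ne_top.mpr (ENNReal.inv_ne_top.mpr h1)))

end Final
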